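/- Let D ⊆ H₋ be compact convex with F = D ∩ H, and suppose E ⊆ H₊ is a compact convex set contained in a convex cone Σ with tip at a point at infinity (i.e., Σ is the limit of cones Cone_{p_i}(F) with p_i → ∞ in a fixed direction u transverse to H; equivalently Σ = F + ℝ_{≥0}·u), such that D ∩ E = D ∩ H = E ∩ H = F and for each x₁ ∈ Σ and x₂ ∈ D the segment [x₁, x₂] meets H inside F. Then D ∪ E is convex. -/
import Mathlib


theorem stmt_18 {n : ℕ} (f : EuclideanSpace ℝ (Fin n) →ₗ[ℝ] ℝ) (hf : f ≠ 0) (c : ℝ)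
    (D : Set (EuclideanSpace ℝ (Fin n))) (hDc : IsCompact D) (hDconv : Convex ℝ D)
    (hD : D ⊆ {x | f x ≤ c})
    (u : EuclideanSpace ℝ (Fin n)) (hu : ‖u‖ = 1) (hfu : 0 < f u)
    (F : Set (EuclideanSpace ℝ (Fin n))) (hF : F = D ∩ {x | f x = c})
    (Sig : Set (EuclideanSpace ℝ (Fin n)))
    (hSig : Sig = {y | ∃ q ∈ F, ∃ t : ℝ, 0 ≤ t ∧ y = q + t • u})
    (E : Set (EuclideanSpace ℝ (Fin n))) (hEc : IsCompact E) (hEconv : Convex ℝ E)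
    (hE : E ⊆ Sig ∩ {x | c ≤ f x})
    (hDE : D ∩ E = F) (hEH : E ∩ {x | f x = c} = F) (hDH : D ∩ {x | f x = c} = F)
    (hcross : ∀ x₁ ∈ Sig, ∀ x₂ ∈ D, segment ℝ x₁ x₂ ∩ {x | f x = c} ⊆ F) :
    Convex ℝ (D ∪ E) := by
  have hFD : F ⊆ D := by rw [hF]; exact Set.inter_subset_left
  have hFE : F ⊆ E := by rw [← hDE]; exact Set.inter_subset_right
  -- key lemma: segments between D and E stay in D ∪ E
  have key : ∀ x ∈ D, ∀ y ∈ E, ∀ a b : ℝ, 0 ≤ a → 0 ≤ b → a + b = 1 →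
      a • x + b • y ∈ D ∪ E := by
    intro x hx y hy a b ha hb hab
    have hfx : f x ≤ c := hD hx
    have hfy : c ≤ f y := (hE hy).2
    by_cases hyc : f y = c
    · -- y ∈ F ⊆ D
      have hyD : y ∈ D := hFD (hEH ▸ ⟨hy, hyc⟩)
      exact Or.inl (hDconv hx hyD ha hb hab)
    by_cases hxc : f x = c
    · have hxE : x ∈ E := hFE (hDH ▸ ⟨hx, hxc⟩)
      exact Or.inr (hEconv hxE hy ha hb hab)
    have hfx' : f x < c := lt_of_le_of_ne hfx hxc
    have hfy' : c < f y := lt_of_le_of_ne hfy (Ne.symm hyc)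
    set s : ℝ := (c - f x) / (f y - f x) with hs
    have hd : (0:ℝ) < f y - f x := by linarith
    have hs0 : 0 < s := div_pos (by linarith) hd
    have hs1 : s < 1 := (div_lt_one hd).2 (by linarith)
    set z := s • y + (1 - s) • x with hz
    have hfz : f z = c := by
      have : f z = s * f y + (1 - s) * f x := by simp [hz, map_add, map_smul]
      rw [this, hs]
      field_simp
      ring
    have hzF : z ∈ F := by
      refine hcross y (hE hy).1 x hx ⟨?_, hfz⟩
      exact ⟨s, 1 - s, le_of_lt hs0, by linarith, by ring, rfl⟩
    have h1s : (1:ℝ) - s ≠ 0 := by linarith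
    have hsne : s ≠ 0 := ne_of_gt hs0
    rcases le_total s b with hsb | hbs
    · -- p ∈ E, combination of y and z
      set t : ℝ := (b - s) / (1 - s) with ht
      have ht0 : 0 ≤ t := div_nonneg (by linarith) (by linarith)
      have ht1 : t ≤ 1 := by
        rw [ht, div_le_one (by linarith)]; linarith
      have heq : a • x + b • y = t • y + (1 - t) • z := by
        rw [hz]
        have hab' : a = 1 - b := by linarith
        match_scalars <;> simp only [ht, hab'] <;> field_simp <;> ring
      rw [heq]
      exact Or.inr (hEconv hy (hFE hzF) ht0 (by linarith) (by ring))
    · -- p ∈ D, combination of x and z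
      set t : ℝ := 1 - b / s with ht
      have ht1 : t ≤ 1 := by
        have h : 0 ≤ b / s := div_nonneg hb (le_of_lt hs0)
        rw [ht]; linarith
      have ht0 : 0 ≤ t := by
        rw [ht]
        have : b / s ≤ 1 := (div_le_one hs0).2 hbs
        linarith
      have heq : a • x + b • y = t • x + (1 - t) • z := by
        rw [hz]
        have hab' : a = 1 - b := by linarith
        match_scalars <;> simp only [ht, hab'] <;> field_simp <;> ring
      rw [heq]
      exact Or.inl (hDconv hx (hFD hzF) ht0 (by linarith) (by ring))
  intro x hx y hy a b ha hb hab
  rcases hx with hx | hx <;> rcases hy with hy | hy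
  · exact Or.inl (hDconv hx hy ha hb hab)
  · exact key x hx y hy a b ha hb hab
  · have := key y hy x hx b a hb ha (by linarith)
    rwa [add_comm] at this
  · exact Or.inr (hEconv hx hy ha hb hab)
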